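/- Suppose an algorithm's minimum empirical index at time N satisfies C̃(N) ≥ N/T* − C·N^{1−ξ} for all N ≥ T_stable, where T* > 0, C > 0, ξ ∈ (0,1) are constants and T_stable is a random time with finite expectation, and the algorithm stops at time τ_δ = inf{N : C̃(N) > β(N, δ)} with threshold β(N, δ) = log(1/δ) + c·log(1 + log N) for a constant c > 0. Then limsup_{δ→0} E[τ_δ]/log(1/δ) ≤ T*. -/

import Mathlib

open MeasureTheory

/-- Suppose the nondecreasing stopping statistic satisfies
`C̃(N) ≥ N/T* − C·N^{1−ξ}` for all `N ≥ T_stable` (a random time with finite expectation),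
and the algorithm stops at `τ_δ = inf{N : C̃(N) > β(N,δ)}` with
`β(N,δ) = log(1/δ) + c·log(1 + log N)`. Then `limsup_{δ→0⁺} E[τ_δ]/log(1/δ) ≤ T*`. -/
theorem stmt_19 {Ω : Type*} {m0 : MeasurableSpace Ω} (μ : Measure Ω)
    [IsProbabilityMeasure μ]
    (Tstar Cc ξ c : ℝ) (hT : 0 < Tstar) (hC : 0 < Cc) (hξ : ξ ∈ Set.Ioo (0 : ℝ) 1)
    (hc : 0 < c)
    (Ctil : ℕ → Ω → ℝ) (Tstable : Ω → ℕ)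
    (hmeas : ∀ N, Measurable (Ctil N)) (hTmeas : Measurable Tstable)
    (hTint : Integrable (fun ω => (Tstable ω : ℝ)) μ)
    (hmono : ∀ ω, Monotone fun N => Ctil N ω)
    (hlb : ∀ ω, ∀ N : ℕ, Tstable ω ≤ N →
      (N : ℝ) / Tstar - Cc * (N : ℝ) ^ (1 - ξ) ≤ Ctil N ω) :
    Filter.limsup
      (fun δ : ℝ =>
        (∫ ω, ((sInf {N : ℕ |
            Real.log (1 / δ) + c * Real.log (1 + Real.log N) < Ctil N ω} : ℕ) : ℝ) ∂μ) /
          Real.log (1 / δ))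
      (nhdsWithin 0 (Set.Ioi 0)) ≤ Tstar := by
  obtain ⟨hξ0, hξ1⟩ := hξ
  set l : Filter ℝ := nhdsWithin 0 (Set.Ioi 0) with hl
  set F : ℝ → ℝ := fun δ : ℝ =>
      (∫ ω, ((sInf {N : ℕ |
          Real.log (1 / δ) + c * Real.log (1 + Real.log N) < Ctil N ω} : ℕ) : ℝ) ∂μ) /
        Real.log (1 / δ) with hF
  -- log(1/δ) → ∞ as δ → 0⁺
  have hlog : Filter.Tendsto (fun δ : ℝ => Real.log (1 / δ)) l Filter.atTop := by
    have h1 : Filter.Tendsto (fun δ : ℝ => δ⁻¹) l Filter.atTop := tendsto_inv_nhdsGT_zero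
    exact (Real.tendsto_log_atTop.comp h1).congr fun δ => by
      rw [Function.comp_apply, one_div]
  -- eventually δ ∈ (0,1)
  have hIoo : Set.Ioo (0 : ℝ) 1 ∈ l := Ioo_mem_nhdsGT one_pos
  -- F is eventually nonnegative
  have hF0 : ∀ᶠ δ in l, (0 : ℝ) ≤ F δ := by
    filter_upwards [hIoo] with δ hδ
    have hL : 0 < Real.log (1 / δ) := Real.log_pos (one_lt_one_div hδ.1 hδ.2)
    exact div_nonneg (integral_nonneg fun ω => Nat.cast_nonneg _) hL.le
  refine le_of_forall_gt_imp_ge_of_dense fun b hb => ?_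
  have hb0 : 0 < b := hT.trans hb
  -- choose N₀ so that the sublinear terms are dominated for N ≥ N₀
  have ha : 0 < 1 / Tstar - 1 / b := by
    have : 1 / b < 1 / Tstar := one_div_lt_one_div_of_lt hT hb
    linarith
  have t1 : Filter.Tendsto (fun x : ℝ => Cc * x ^ (1 - ξ) / x) Filter.atTop (nhds 0) := by
    have h0 : Filter.Tendsto (fun x : ℝ => Cc * x ^ (-ξ)) Filter.atTop (nhds 0) := by
      simpa using (tendsto_rpow_neg_atTop hξ0).const_mul Cc
    apply h0.congr'
    filter_upwards [Filter.eventually_gt_atTop 0] with x hx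
    rw [mul_div_assoc]
    congr 1
    rw [show -ξ = (1 - ξ) - 1 by ring, Real.rpow_sub hx, Real.rpow_one]
  have hlogdiv : Filter.Tendsto (fun x : ℝ => Real.log x / x) Filter.atTop (nhds 0) :=
    Real.isLittleO_log_id_atTop.tendsto_div_nhds_zero
  have t2 : Filter.Tendsto (fun x : ℝ => c * Real.log (1 + Real.log x) / x)
      Filter.atTop (nhds 0) := by
    have hup : Filter.Tendsto (fun x : ℝ => c * (Real.log x / x)) Filter.atTop (nhds 0) := by
      simpa using hlogdiv.const_mul c
    apply tendsto_of_tendsto_of_tendsto_of_le_of_le' tendsto_const_nhds hup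
    · filter_upwards [Filter.eventually_ge_atTop 1] with x hx
      have hx0 : (0 : ℝ) < x := lt_of_lt_of_le one_pos hx
      have h1 : (1 : ℝ) ≤ 1 + Real.log x := by
        have := Real.log_nonneg hx; linarith
      have h2 : 0 ≤ Real.log (1 + Real.log x) := Real.log_nonneg h1
      positivity
    · filter_upwards [Filter.eventually_ge_atTop 1] with x hx
      have hx0 : (0 : ℝ) < x := lt_of_lt_of_le one_pos hx
      have h2 : 1 + Real.log x ≤ x := by
        have := Real.log_le_sub_one_of_pos hx0; linarith
      have h3 : Real.log (1 + Real.log x) ≤ Real.log x := by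
        have h1 : (0 : ℝ) < 1 + Real.log x := by
          have := Real.log_nonneg hx; linarith
        exact Real.log_le_log h1 h2
      rw [mul_div_assoc]
      gcongr
  have tsum : Filter.Tendsto
      (fun x : ℝ => (Cc * x ^ (1 - ξ) + c * Real.log (1 + Real.log x)) / x)
      Filter.atTop (nhds 0) := by
    have := t1.add t2
    simp only [add_zero] at this
    exact this.congr fun x => by rw [add_div]
  have hev : ∀ᶠ x : ℝ in Filter.atTop,
      Cc * x ^ (1 - ξ) + c * Real.log (1 + Real.log x) ≤ (1 / Tstar - 1 / b) * x := by
    filter_upwards [tsum.eventually_lt_const ha, Filter.eventually_gt_atTop 0] with x h hx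
    exact ((div_lt_iff₀ hx).mp h).le
  obtain ⟨N₀, hN₀⟩ := Filter.eventually_atTop.mp (tendsto_natCast_atTop_atTop.eventually hev)
  -- the key eventual bound on F
  set A : ℝ := (∫ ω, (Tstable ω : ℝ) ∂μ) + N₀ + 2 with hA
  have key : ∀ᶠ δ in l, F δ ≤ A / Real.log (1 / δ) + b := by
    filter_upwards [hIoo] with δ hδ
    set L : ℝ := Real.log (1 / δ) with hLdef
    have hL : 0 < L := Real.log_pos (one_lt_one_div hδ.1 hδ.2)
    set K : ℕ := N₀ + (⌈b * L⌉₊ + 1) with hK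
    -- pointwise bound on the stopping time
    have hpt : ∀ ω : Ω, ((sInf {N : ℕ |
        Real.log (1 / δ) + c * Real.log (1 + Real.log N) < Ctil N ω} : ℕ) : ℝ)
        ≤ (Tstable ω : ℝ) + K := by
      intro ω
      set M : ℕ := max (max (Tstable ω) N₀) (⌈b * L⌉₊ + 1) with hM
      have hM1 : Tstable ω ≤ M := le_max_of_le_left (le_max_left _ _)
      have hM2 : N₀ ≤ M := le_max_of_le_left (le_max_right _ _)
      have hM3 : ⌈b * L⌉₊ + 1 ≤ M := le_max_right _ _
      have hMb : b * L < (M : ℝ) := by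
        have h1 : b * L ≤ (⌈b * L⌉₊ : ℝ) := Nat.le_ceil _
        have h2 : ((⌈b * L⌉₊ + 1 : ℕ) : ℝ) ≤ (M : ℝ) := Nat.cast_le.mpr hM3
        push_cast at h2
        linarith
      have h5 := hlb ω M hM1
      have h6 := hN₀ M hM2
      have hmem : M ∈ {N : ℕ |
          Real.log (1 / δ) + c * Real.log (1 + Real.log N) < Ctil N ω} := by
        have e1 : (M : ℝ) / Tstar - (1 / Tstar - 1 / b) * M = (M : ℝ) / b := by
          field_simp
          ring
        have e2 : L < (M : ℝ) / b := by
          rw [lt_div_iff₀ hb0]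
          linarith [mul_comm b L]
        show Real.log (1 / δ) + c * Real.log (1 + Real.log M) < Ctil M ω
        have : L + c * Real.log (1 + Real.log (M : ℝ)) < (M : ℝ) / b +
            c * Real.log (1 + Real.log (M : ℝ)) := by linarith
        calc Real.log (1 / δ) + c * Real.log (1 + Real.log (M : ℝ))
            < (M : ℝ) / b + c * Real.log (1 + Real.log (M : ℝ)) := this
          _ ≤ (M : ℝ) / Tstar - Cc * (M : ℝ) ^ (1 - ξ) := by
              rw [← e1] at *; linarith
          _ ≤ Ctil M ω := h5
      have hInf : sInf {N : ℕ |
          Real.log (1 / δ) + c * Real.log (1 + Real.log N) < Ctil N ω} ≤ M :=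
        Nat.sInf_le hmem
      have hMle : M ≤ Tstable ω + K := by
        simp only [hM, hK]; omega
      calc ((sInf {N : ℕ |
          Real.log (1 / δ) + c * Real.log (1 + Real.log N) < Ctil N ω} : ℕ) : ℝ)
          ≤ (M : ℝ) := Nat.cast_le.mpr hInf
        _ ≤ ((Tstable ω + K : ℕ) : ℝ) := Nat.cast_le.mpr hMle
        _ = (Tstable ω : ℝ) + K := by push_cast; ring
    -- integrate the pointwise bound
    have hint : Integrable (fun ω => (Tstable ω : ℝ) + (K : ℝ)) μ :=
      hTint.add (integrable_const _)
    have hI : (∫ ω, ((sInf {N : ℕ |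
        Real.log (1 / δ) + c * Real.log (1 + Real.log N) < Ctil N ω} : ℕ) : ℝ) ∂μ)
        ≤ (∫ ω, (Tstable ω : ℝ) ∂μ) + K := by
      calc (∫ ω, ((sInf {N : ℕ |
          Real.log (1 / δ) + c * Real.log (1 + Real.log N) < Ctil N ω} : ℕ) : ℝ) ∂μ)
          ≤ ∫ ω, ((Tstable ω : ℝ) + (K : ℝ)) ∂μ :=
            integral_mono_of_nonneg (Filter.Eventually.of_forall fun ω => Nat.cast_nonneg _)
              hint (Filter.Eventually.of_forall hpt)
        _ = (∫ ω, (Tstable ω : ℝ) ∂μ) + K := by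
            rw [integral_add hTint (integrable_const _), integral_const]
            simp
    have hKle : (K : ℝ) ≤ (N₀ : ℝ) + (b * L + 1) + 1 := by
      have h := Nat.ceil_lt_add_one (mul_nonneg hb0.le hL.le) (R := ℝ)
      rw [hK]
      push_cast
      linarith
    have hnum : (∫ ω, ((sInf {N : ℕ |
        Real.log (1 / δ) + c * Real.log (1 + Real.log N) < Ctil N ω} : ℕ) : ℝ) ∂μ)
        ≤ A + b * L := by
      rw [hA]; linarith
    have : F δ ≤ (A + b * L) / L := by
      rw [hF]
      exact (div_le_div_iff_of_pos_right hL).mpr hnum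
    calc F δ ≤ (A + b * L) / L := this
      _ = A / L + b := by rw [add_div, mul_div_assoc, div_self hL.ne', mul_one]
  -- pass to the limsup
  have hg : Filter.Tendsto (fun δ : ℝ => A / Real.log (1 / δ) + b) l (nhds (0 + b)) :=
    (Filter.Tendsto.div_atTop tendsto_const_nhds hlog).add tendsto_const_nhds
  calc Filter.limsup F l
      ≤ Filter.limsup (fun δ : ℝ => A / Real.log (1 / δ) + b) l :=
        Filter.limsup_le_limsup key
          (Filter.isCoboundedUnder_le_of_eventually_le l hF0)
          hg.isBoundedUnder_le
    _ = 0 + b := hg.limsup_eq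
    _ = b := zero_add b
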